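/- Define lower-triangular (n+1)×(n+1) matrices P and S over R by: P_{ℓℓ} = S_{ℓℓ} = 1 for 1 ≤ ℓ ≤ n+1; P_{jℓ} = L(ℓ, j−1) and S_{jℓ} = (−1)^{j−ℓ} · L*(ℓ, j−1) for 1 ≤ ℓ < j ≤ n+1; and P_{ℓj} = S_{ℓj} = 0 for ℓ < j. Then P·S = S·P = I_{n+1}, i.e., S = P^{−1}. (This is the explicit computation of the inverse Υ = Ψ^{−1} of the rigid analytic trivialization of the Anderson–Thakur dual t-motive, derived from the Lemma on 𝔏 and 𝔏* series.) -/

import Mathlib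

open scoped BigOperators

/-- `Lser f ℓ j = L(ℓ,j) = Σ_{i_ℓ > i_{ℓ+1} > ⋯ > i_j ≥ 0} f_ℓ(i_ℓ)⋯f_j(i_j)`,
the sum over strictly decreasing tuples of nonnegative integers.
By convention `Lser f ℓ (ℓ-1) = 1` (empty tuple). -/
noncomputable def Lser {R : Type*} [NormedCommRing R] (f : ℕ → ℕ → R) (ℓ j : ℕ) : R :=
  ∑' g : {g : Fin (j + 1 - ℓ) → ℕ // StrictAnti g},
    ∏ m : Fin (j + 1 - ℓ), f (ℓ + (m : ℕ)) (g.1 m)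

/-- `Lstar f ℓ j = L*(ℓ,j) = Σ_{0 ≤ i_ℓ ≤ i_{ℓ+1} ≤ ⋯ ≤ i_j} f_ℓ(i_ℓ)⋯f_j(i_j)`,
the sum over weakly increasing tuples of nonnegative integers.
By convention `Lstar f ℓ (ℓ-1) = 1` (empty tuple). -/
noncomputable def Lstar {R : Type*} [NormedCommRing R] (f : ℕ → ℕ → R) (ℓ j : ℕ) : R :=
  ∑' g : {g : Fin (j + 1 - ℓ) → ℕ // Monotone g},
    ∏ m : Fin (j + 1 - ℓ), f (ℓ + (m : ℕ)) (g.1 m)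

/-- The lower-triangular `(n+1)×(n+1)` matrix `P` with `P_{ℓℓ} = 1`, `P_{jℓ} = L(ℓ, j−1)`
for `1 ≤ ℓ < j ≤ n+1` and `P_{ℓj} = 0` for `ℓ < j`.  Rows and columns are indexed by
`Fin (n+1)`, with index `a : Fin (n+1)` corresponding to the `1`-based index `a+1`. -/
noncomputable def Pmat {R : Type*} [NormedCommRing R] (f : ℕ → ℕ → R) (n : ℕ) :
    Matrix (Fin (n + 1)) (Fin (n + 1)) R :=
  Matrix.of fun a b =>
    if (a : ℕ) = b then 1
    else if (b : ℕ) < a then Lser f ((b : ℕ) + 1) (a : ℕ)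
    else 0

/-- The lower-triangular `(n+1)×(n+1)` matrix `S` with `S_{ℓℓ} = 1`,
`S_{jℓ} = (−1)^{j−ℓ} · L*(ℓ, j−1)` for `1 ≤ ℓ < j ≤ n+1` and `S_{ℓj} = 0` for `ℓ < j`. -/
noncomputable def Smat {R : Type*} [NormedCommRing R] (f : ℕ → ℕ → R) (n : ℕ) :
    Matrix (Fin (n + 1)) (Fin (n + 1)) R :=
  Matrix.of fun a b =>
    if (a : ℕ) = b then 1
    else if (b : ℕ) < a then (-1 : R) ^ ((a : ℕ) - b) * Lstar f ((b : ℕ) + 1) (a : ℕ)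
    else 0

open Filter
section AuxStmt2


section Aux

variable {R : Type*} [NormedCommRing R] [IsUltrametricDist R] [CompleteSpace R]

/-- master summability lemma -/
lemma summable_master (f : ℕ → ℕ → R) {α : Type*} (d ℓ : ℕ) (hd : 0 < d)
    (hb : ∀ m, m < d → Filter.Tendsto (fun i => ‖f (ℓ + m) i‖) Filter.atTop (nhds 0))
    (F : α → R) (c : α → Fin d → ℕ)
    (hfin : ∀ N : ℕ, {a : α | ∀ m, c a m < N}.Finite)
    (hF : ∀ a, ‖F a‖ ≤ ∏ m : Fin d, ‖f (ℓ + (m : ℕ)) (c a m)‖) :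
    Summable F := by
  haveI : Nonempty (Fin d) := ⟨⟨0, hd⟩⟩
  apply NonarchimedeanAddGroup.summable_of_tendsto_cofinite_zero
  rw [Metric.tendsto_nhds]
  intro ε hε
  rw [Filter.eventually_cofinite]
  -- bounds
  have hbdd : ∀ m : Fin d, ∃ C : ℝ, ∀ i, ‖f (ℓ + (m : ℕ)) i‖ ≤ C := by
    intro m
    obtain ⟨C, hC⟩ := (hb m m.2).bddAbove_range
    exact ⟨C, fun i => hC (Set.mem_range_self i)⟩
  choose B hB using hbdd
  set C : ℝ := 1 + ∑ m : Fin d, max (B m) 0 with hCdef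
  have hC1 : 1 ≤ C := by
    have : (0:ℝ) ≤ ∑ m : Fin d, max (B m) 0 :=
      Finset.sum_nonneg fun m _ => le_max_right _ _
    simp only [hCdef]; linarith
  have hC0 : 0 < C := lt_of_lt_of_le one_pos hC1
  have hCm : ∀ (m : Fin d) (i : ℕ), ‖f (ℓ + (m : ℕ)) i‖ ≤ C := by
    intro m i
    have h1 : B m ≤ ∑ m' : Fin d, max (B m') 0 :=
      le_trans (le_max_left _ _)
        (Finset.single_le_sum (f := fun m' => max (B m') 0)
          (fun m' _ => le_max_right _ _) (Finset.mem_univ m))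
    calc ‖f (ℓ + (m : ℕ)) i‖ ≤ B m := hB m i
      _ ≤ C := by simp only [hCdef]; linarith
  set ε' : ℝ := ε / C ^ (d - 1) with hε'def
  have hpow : (0:ℝ) < C ^ (d - 1) := pow_pos hC0 _
  have hε' : 0 < ε' := div_pos hε hpow
  have hNm : ∀ m : Fin d, ∃ N, ∀ i, N ≤ i → ‖f (ℓ + (m : ℕ)) i‖ < ε' := by
    intro m
    have := (hb m m.2)
    rw [Metric.tendsto_atTop] at this
    obtain ⟨N, hN⟩ := this ε' hε'
    refine ⟨N, fun i hi => ?_⟩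
    have := hN i hi
    rwa [Real.dist_eq, sub_zero, abs_norm] at this
  choose N hN using hNm
  set N₀ := Finset.univ.sup N with hN₀
  refine (hfin N₀).subset ?_
  intro a ha
  simp only [Set.mem_setOf_eq] at ha ⊢
  by_contra hcon
  push_neg at hcon
  obtain ⟨m₀, hm₀⟩ := hcon
  apply ha
  rw [dist_zero_right]
  have hrest : ∏ m ∈ Finset.univ.erase m₀, ‖f (ℓ + (m : ℕ)) (c a m)‖ ≤ C ^ (d - 1) := by
    have := Finset.prod_le_prod (s := Finset.univ.erase m₀)
      (f := fun m : Fin d => ‖f (ℓ + (m : ℕ)) (c a m)‖) (g := fun _ => C)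
      (fun m _ => norm_nonneg _) (fun m _ => hCm m _)
    rw [Finset.prod_const] at this
    rwa [Finset.card_erase_of_mem (Finset.mem_univ _), Finset.card_univ,
      Fintype.card_fin] at this
  calc ‖F a‖ ≤ ∏ m : Fin d, ‖f (ℓ + (m : ℕ)) (c a m)‖ := hF a
    _ = ‖f (ℓ + (m₀ : ℕ)) (c a m₀)‖ * ∏ m ∈ Finset.univ.erase m₀, ‖f (ℓ + (m : ℕ)) (c a m)‖ :=
      (Finset.mul_prod_erase _ _ (Finset.mem_univ _)).symm
    _ ≤ ‖f (ℓ + (m₀ : ℕ)) (c a m₀)‖ * C ^ (d - 1) :=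
      mul_le_mul_of_nonneg_left hrest (norm_nonneg _)
    _ < ε' * C ^ (d - 1) := by
      apply mul_lt_mul_of_pos_right _ hpow
      exact hN m₀ _ (le_trans (Finset.le_sup (Finset.mem_univ m₀)) (hm₀))
    _ = ε := div_mul_cancel₀ ε (ne_of_gt hpow)

lemma finite_bounded_tuples (d N : ℕ) : {g : Fin d → ℕ | ∀ m, g m < N}.Finite := by
  have hsub : {g : Fin d → ℕ | ∀ m, g m < N} ⊆ Set.pi Set.univ (fun _ => Set.Iio N) := by
    intro g hg m _
    exact hg m
  exact (Set.Finite.pi (fun _ => Set.finite_Iio N)).subset hsub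

lemma summable_pred (f : ℕ → ℕ → R) (d ℓ : ℕ)
    (hb : ∀ m, m < d → Filter.Tendsto (fun i => ‖f (ℓ + m) i‖) Filter.atTop (nhds 0))
    (p : (Fin d → ℕ) → Prop) :
    Summable (fun v : {v : Fin d → ℕ // p v} => ∏ m : Fin d, f (ℓ + (m : ℕ)) (v.1 m)) := by
  rcases Nat.eq_zero_or_pos d with h | h
  · subst h
    exact Summable.of_finite
  · haveI : Nonempty (Fin d) := ⟨⟨0, h⟩⟩
    apply summable_master f d ℓ h hb _ (fun v => v.1)
    · intro N
      have : {a : {v : Fin d → ℕ // p v} | ∀ m, a.1 m < N}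
          = Subtype.val ⁻¹' {g : Fin d → ℕ | ∀ m, g m < N} := rfl
      rw [this]
      exact (finite_bounded_tuples d N).preimage (Subtype.val_injective.injOn)
    · intro a
      exact Finset.norm_prod_le' Finset.univ Finset.univ_nonempty _

end Aux


/-- `Gd r v` : `v` is weakly increasing on positions `< r` and strictly decreasing from `r` on. -/
def Gd (r : ℕ) {d : ℕ} (v : Fin d → ℕ) : Prop :=
  (∀ i j : Fin d, (i : ℕ) ≤ j → (j : ℕ) < r → v i ≤ v j) ∧
  (∀ i j : Fin d, r ≤ (i : ℕ) → (i : ℕ) < (j : ℕ) → v j < v i)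

section Defs
variable {R : Type*} [NormedCommRing R]

noncomputable def MSum (f : ℕ → ℕ → R) (ℓ c : ℕ) : R :=
  ∑' g : {g : Fin c → ℕ // Monotone g}, ∏ m : Fin c, f (ℓ + (m : ℕ)) (g.1 m)

noncomputable def ASum (f : ℕ → ℕ → R) (ℓ c : ℕ) : R :=
  ∑' g : {g : Fin c → ℕ // StrictAnti g}, ∏ m : Fin c, f (ℓ + (m : ℕ)) (g.1 m)

noncomputable def GSum (f : ℕ → ℕ → R) (ℓ d r : ℕ) : R :=
  ∑' v : {v : Fin d → ℕ // Gd r v}, ∏ m : Fin d, f (ℓ + (m : ℕ)) (v.1 m)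

lemma GSum_congr (f : ℕ → ℕ → R) (ℓ r : ℕ) {d d' : ℕ} (h : d = d') :
    GSum f ℓ d r = GSum f ℓ d' r := by subst h; rfl

end Defs

/-- concatenation of tuples -/
def splitv {c e : ℕ} (g : Fin c → ℕ) (h : Fin e → ℕ) : Fin (c + e) → ℕ :=
  fun m => if hm : (m : ℕ) < c then g ⟨m, hm⟩ else h ⟨(m : ℕ) - c, by omega⟩


lemma splitv_castAdd {c e : ℕ} (g : Fin c → ℕ) (h : Fin e → ℕ) (i : Fin c) :
    splitv g h (Fin.castAdd e i) = g i := by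
  have hi : ((Fin.castAdd e i : Fin (c+e)) : ℕ) < c := by simp [i.2]
  simp only [splitv, dif_pos hi]
  congr 1

lemma splitv_natAdd {c e : ℕ} (g : Fin c → ℕ) (h : Fin e → ℕ) (i : Fin e) :
    splitv g h (Fin.natAdd c i) = h i := by
  have hi : ¬ ((Fin.natAdd c i : Fin (c+e)) : ℕ) < c := by simp
  simp only [splitv, dif_neg hi]
  congr 1
  exact Fin.ext (by simp)

lemma splitv_good {c e : ℕ} (g : Fin c → ℕ) (h : Fin e → ℕ)
    (hg : Monotone g) (hh : StrictAnti h) : Gd c (splitv g h) := by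
  constructor
  · intro i j hij hj
    have hi : (i : ℕ) < c := lt_of_le_of_lt hij hj
    simp only [splitv, dif_pos hi, dif_pos hj]
    exact hg (show (⟨(i:ℕ), hi⟩ : Fin c) ≤ ⟨(j:ℕ), hj⟩ from hij)
  · intro i j hi hij
    have hj : ¬ (j : ℕ) < c := by omega
    have hi' : ¬ (i : ℕ) < c := by omega
    simp only [splitv, dif_neg hi', dif_neg hj]
    exact hh (show (⟨(i:ℕ) - c, by omega⟩ : Fin e) < ⟨(j:ℕ) - c, by omega⟩ by
      simp only [Fin.mk_lt_mk]; omega)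

/-- The pairing equivalence -/
def pairEquiv (c e : ℕ) :
    ({g : Fin c → ℕ // Monotone g} × {h : Fin e → ℕ // StrictAnti h})
      ≃ {v : Fin (c + e) → ℕ // Gd c v} where
  toFun p := ⟨splitv p.1.1 p.2.1, splitv_good _ _ p.1.2 p.2.2⟩
  invFun v :=
    (⟨fun i => v.1 (Fin.castAdd e i), by
        intro i j hij
        exact v.2.1 _ _ (by simpa using (hij : (i:ℕ) ≤ j)) (by simp [i.2, j.2])⟩,
     ⟨fun i => v.1 (Fin.natAdd c i), by
        intro i j hij
        exact v.2.2 _ _ (by simp) (by simpa using (hij : (i:ℕ) < j))⟩)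
  left_inv p := by
    ext i
    · exact splitv_castAdd p.1.1 p.2.1 i
    · exact splitv_natAdd p.1.1 p.2.1 i
  right_inv v := by
    apply Subtype.ext
    funext m
    by_cases hm : (m : ℕ) < c
    · show splitv _ _ m = v.1 m
      simp only [splitv, dif_pos hm]
      congr 1
    · show splitv _ _ m = v.1 m
      simp only [splitv, dif_neg hm]
      have hidx : Fin.natAdd c ⟨(m:ℕ) - c, by omega⟩ = m := by
        apply Fin.ext
        simp only [Fin.coe_natAdd]
        omega
      rw [hidx]

section MulEq
variable {R : Type*} [NormedCommRing R] [IsUltrametricDist R] [CompleteSpace R]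

lemma prod_split (f : ℕ → ℕ → R) (ℓ : ℕ) {c e : ℕ} (g : Fin c → ℕ) (h : Fin e → ℕ) :
    ∏ m : Fin (c + e), f (ℓ + (m : ℕ)) (splitv g h m)
      = (∏ i : Fin c, f (ℓ + (i : ℕ)) (g i)) * ∏ i : Fin e, f (ℓ + c + (i : ℕ)) (h i) := by
  rw [Fin.prod_univ_add (f := fun m : Fin (c+e) => f (ℓ + (m : ℕ)) (splitv g h m))]
  congr 1
  · apply Finset.prod_congr rfl
    intro i _
    rw [splitv_castAdd]
    rfl
  · apply Finset.prod_congr rfl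
    intro i _
    rw [splitv_natAdd]
    congr 1
    simp [add_assoc]

end MulEq

section MulEq2
variable {R : Type*} [NormedCommRing R] [IsUltrametricDist R] [CompleteSpace R]

lemma summable_msum (f : ℕ → ℕ → R) (ℓ c : ℕ)
    (hb : ∀ m, m < c → Filter.Tendsto (fun i => ‖f (ℓ + m) i‖) Filter.atTop (nhds 0)) :
    Summable (fun g : {g : Fin c → ℕ // Monotone g} =>
      ∏ m : Fin c, f (ℓ + (m : ℕ)) (g.1 m)) :=
  summable_pred f c ℓ hb _

lemma summable_asum (f : ℕ → ℕ → R) (ℓ c : ℕ)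
    (hb : ∀ m, m < c → Filter.Tendsto (fun i => ‖f (ℓ + m) i‖) Filter.atTop (nhds 0)) :
    Summable (fun g : {g : Fin c → ℕ // StrictAnti g} =>
      ∏ m : Fin c, f (ℓ + (m : ℕ)) (g.1 m)) :=
  summable_pred f c ℓ hb _

lemma mul_eq_gsum (f : ℕ → ℕ → R) (ℓ c e : ℕ)
    (hb : ∀ m, m < c + e → Filter.Tendsto (fun i => ‖f (ℓ + m) i‖) Filter.atTop (nhds 0)) :
    MSum f ℓ c * ASum f (ℓ + c) e = GSum f ℓ (c + e) c := by
  have hbc : ∀ m, m < c → Filter.Tendsto (fun i => ‖f (ℓ + m) i‖) Filter.atTop (nhds 0) :=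
    fun m hm => hb m (by omega)
  have hbe : ∀ m, m < e → Filter.Tendsto (fun i => ‖f (ℓ + c + m) i‖) Filter.atTop (nhds 0) := by
    intro m hm
    have := hb (c + m) (by omega)
    rwa [← add_assoc] at this
  have hM := summable_msum f ℓ c hbc
  have hA := summable_asum f (ℓ + c) e hbe
  have hG : Summable (fun v : {v : Fin (c + e) → ℕ // Gd c v} =>
      ∏ m : Fin (c + e), f (ℓ + (m : ℕ)) (v.1 m)) := summable_pred f (c + e) ℓ hb _
  have hcomp : ∀ p : ({g : Fin c → ℕ // Monotone g} × {h : Fin e → ℕ // StrictAnti h}),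
      (∏ m : Fin (c + e), f (ℓ + (m : ℕ)) (((pairEquiv c e) p).1 m))
        = (∏ m : Fin c, f (ℓ + (m : ℕ)) (p.1.1 m))
          * ∏ m : Fin e, f (ℓ + c + (m : ℕ)) (p.2.1 m) := by
    intro p
    exact prod_split f ℓ p.1.1 p.2.1
  have hpair : Summable (fun p : ({g : Fin c → ℕ // Monotone g} ×
      {h : Fin e → ℕ // StrictAnti h}) =>
      (∏ m : Fin c, f (ℓ + (m : ℕ)) (p.1.1 m))
        * ∏ m : Fin e, f (ℓ + c + (m : ℕ)) (p.2.1 m)) := by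
    have h1 := ((pairEquiv c e).summable_iff
      (f := fun v : {v : Fin (c + e) → ℕ // Gd c v} =>
        ∏ m : Fin (c + e), f (ℓ + (m : ℕ)) (v.1 m))).mpr hG
    exact h1.congr hcomp
  calc MSum f ℓ c * ASum f (ℓ + c) e
      = ∑' p : ({g : Fin c → ℕ // Monotone g} × {h : Fin e → ℕ // StrictAnti h}),
        (∏ m : Fin c, f (ℓ + (m : ℕ)) (p.1.1 m))
          * ∏ m : Fin e, f (ℓ + c + (m : ℕ)) (p.2.1 m) :=
        HasSum.mul_eq hM.hasSum hA.hasSum hpair.hasSum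
    _ = ∑' p : ({g : Fin c → ℕ // Monotone g} × {h : Fin e → ℕ // StrictAnti h}),
        ∏ m : Fin (c + e), f (ℓ + (m : ℕ)) (((pairEquiv c e) p).1 m) := by
        exact tsum_congr fun p => (hcomp p).symm
    _ = GSum f ℓ (c + e) c := by
        unfold GSum
        exact Equiv.tsum_eq (pairEquiv c e)
          (fun v : {v : Fin (c + e) → ℕ // Gd c v} =>
            ∏ m : Fin (c + e), f (ℓ + (m : ℕ)) (v.1 m))

lemma MSum_zero (f : ℕ → ℕ → R) (ℓ : ℕ) : MSum f ℓ 0 = 1 := by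
  unfold MSum
  haveI : Unique {g : Fin 0 → ℕ // Monotone g} :=
    ⟨⟨⟨fun i => i.elim0, fun a => a.elim0⟩⟩, by
      rintro ⟨g, hg⟩
      exact Subtype.ext (funext fun i => i.elim0)⟩
  rw [tsum_eq_single default (by intro b hb; exact absurd (Subsingleton.elim b default) hb)]
  simp

lemma ASum_zero (f : ℕ → ℕ → R) (ℓ : ℕ) : ASum f ℓ 0 = 1 := by
  unfold ASum
  haveI : Unique {g : Fin 0 → ℕ // StrictAnti g} :=
    ⟨⟨⟨fun i => i.elim0, fun a => a.elim0⟩⟩, by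
      rintro ⟨g, hg⟩
      exact Subtype.ext (funext fun i => i.elim0)⟩
  rw [tsum_eq_single default (by intro b hb; exact absurd (Subsingleton.elim b default) hb)]
  simp

lemma Lstar_eq_MSum (f : ℕ → ℕ → R) (ℓ j c : ℕ) (h : j + 1 - ℓ = c) :
    Lstar f ℓ j = MSum f ℓ c := by subst h; rfl

lemma Lser_eq_ASum (f : ℕ → ℕ → R) (ℓ j c : ℕ) (h : j + 1 - ℓ = c) :
    Lser f ℓ j = ASum f ℓ c := by subst h; rfl

end MulEq2

section Invol

variable {R : Type*} [NormedCommRing R] [IsUltrametricDist R] [CompleteSpace R]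

/-- the type of "marked" tuples -/
abbrev TT (d : ℕ) := Σ r : Fin (d + 1), {v : Fin d → ℕ // Gd (r : ℕ) v}

lemma T_ext {d : ℕ} {t s : TT d} (h1 : (t.1 : ℕ) = (s.1 : ℕ)) (h2 : t.2.1 = s.2.1) :
    t = s := by
  obtain ⟨r, v, hv⟩ := t
  obtain ⟨r', v', hv'⟩ := s
  have hr : r = r' := Fin.ext h1
  subst hr
  have hvv : v = v' := h2
  subst hvv
  rfl

def Acond {d : ℕ} (t : TT d) : Prop :=
  (t.1 : ℕ) < d ∧ ∀ i j : Fin d, (i : ℕ) + 1 = (t.1 : ℕ) → (j : ℕ) = (t.1 : ℕ) →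
    t.2.1 i ≤ t.2.1 j

lemma Gd_up' {d r : ℕ} (hrd : r < d) {v : Fin d → ℕ} (hv : Gd r v)
    (hc : ∀ i j : Fin d, (i : ℕ) + 1 = r → (j : ℕ) = r → v i ≤ v j) : Gd (r + 1) v := by
  constructor
  · intro i j hij hjr1
    by_cases hj : (j : ℕ) < r
    · exact hv.1 i j hij hj
    · have hjr : (j : ℕ) = r := by omega
      rcases Nat.eq_or_lt_of_le hij with he | hlt
      · exact le_of_eq (congrArg v (Fin.ext he))
      · have hr1 : 1 ≤ r := by omega
        have hle : v i ≤ v ⟨r - 1, by omega⟩ := by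
          rcases Nat.eq_or_lt_of_le (show (i : ℕ) ≤ r - 1 by omega) with he2 | hlt2
          · exact le_of_eq (congrArg v (Fin.ext he2))
          · exact hv.1 i ⟨r - 1, by omega⟩ (show (i : ℕ) ≤ r - 1 by omega)
              (show r - 1 < r by omega)
        exact le_trans hle (hc ⟨r - 1, by omega⟩ j (show r - 1 + 1 = r by omega) hjr)
  · intro i j hi hij
    exact hv.2 i j (by omega) hij

lemma Gd_down' {d r : ℕ} (hr1 : 1 ≤ r) {v : Fin d → ℕ} (hv : Gd r v)
    (hc : r = d ∨ ∃ i j : Fin d, (i : ℕ) + 1 = r ∧ (j : ℕ) = r ∧ v j < v i) :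
    Gd (r - 1) v := by
  constructor
  · intro i j hij hj
    exact hv.1 i j hij (by omega)
  · intro i j hi hij
    by_cases hi' : r ≤ (i : ℕ)
    · exact hv.2 i j hi' hij
    · have hieq : (i : ℕ) = r - 1 := by omega
      have hjr : r ≤ (j : ℕ) := by omega
      rcases hc with hd' | ⟨i', j', hi'1, hj', hlt⟩
      · exact absurd j.isLt (by omega)
      · have hii' : i = i' := Fin.ext (by omega)
        have hjj' : v j ≤ v j' := by
          rcases Nat.eq_or_lt_of_le hjr with he | hlt2
          · exact le_of_eq (congrArg v (Fin.ext (by omega)))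
          · exact le_of_lt (hv.2 j' j (by omega) (by omega))
        rw [hii']
        exact lt_of_le_of_lt hjj' hlt

lemma notA_spec {d : ℕ} (hd : 0 < d) (t : TT d) (h : ¬ Acond t) :
    1 ≤ (t.1 : ℕ) ∧ ((t.1 : ℕ) = d ∨ ∃ i j : Fin d, (i : ℕ) + 1 = (t.1 : ℕ) ∧
      (j : ℕ) = (t.1 : ℕ) ∧ t.2.1 j < t.2.1 i) := by
  unfold Acond at h
  push_neg at h
  by_cases hr : (t.1 : ℕ) < d
  · obtain ⟨i, j, h1, h2, h3⟩ := h hr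
    exact ⟨by omega, Or.inr ⟨i, j, h1, h2, h3⟩⟩
  · have ht : (t.1 : ℕ) = d := by have := t.1.isLt; omega
    exact ⟨by omega, Or.inl ht⟩

def Tup {d : ℕ} (t : TT d) (h : Acond t) : TT d :=
  ⟨⟨(t.1 : ℕ) + 1, by have := h.1; omega⟩, ⟨t.2.1, Gd_up' h.1 t.2.2 h.2⟩⟩

def Tdown {d : ℕ} (hd : 0 < d) (t : TT d) (h : ¬ Acond t) : TT d :=
  ⟨⟨(t.1 : ℕ) - 1, by have := t.1.isLt; omega⟩,
   ⟨t.2.1, Gd_down' (notA_spec hd t h).1 t.2.2 (notA_spec hd t h).2⟩⟩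

lemma Tup_notA {d : ℕ} (t : TT d) (h : Acond t) : ¬ Acond (Tup t h) := by
  rintro ⟨h1, h2⟩
  have h1' : (t.1 : ℕ) + 1 < d := h1
  have hle := h2 ⟨(t.1 : ℕ), by omega⟩ ⟨(t.1 : ℕ) + 1, h1'⟩ rfl rfl
  have hlt := t.2.2.2 ⟨(t.1 : ℕ), by omega⟩ ⟨(t.1 : ℕ) + 1, h1'⟩ (le_refl _)
    (by simp)
  simp only [Tup] at hle
  exact absurd (lt_of_le_of_lt hle hlt) (lt_irrefl _)

lemma Tdown_A {d : ℕ} (hd : 0 < d) (t : TT d) (h : ¬ Acond t) :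
    Acond (Tdown hd t h) := by
  have hs := notA_spec hd t h
  constructor
  · show (t.1 : ℕ) - 1 < d
    have := t.1.isLt
    omega
  · intro i j hi hj
    have hi' : (i : ℕ) + 1 = (t.1 : ℕ) - 1 := hi
    have hj' : (j : ℕ) = (t.1 : ℕ) - 1 := hj
    exact t.2.2.1 i j (by omega) (by omega)

lemma Tdown_Tup {d : ℕ} (hd : 0 < d) (t : TT d) (h : Acond t) (h2 : ¬ Acond (Tup t h)) :
    Tdown hd (Tup t h) h2 = t :=
  T_ext (by show (t.1 : ℕ) + 1 - 1 = (t.1 : ℕ); omega) rfl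

lemma Tup_Tdown {d : ℕ} (hd : 0 < d) (t : TT d) (h : ¬ Acond t)
    (h2 : Acond (Tdown hd t h)) : Tup (Tdown hd t h) h2 = t :=
  T_ext (by
    show (t.1 : ℕ) - 1 + 1 = (t.1 : ℕ)
    have := (notA_spec hd t h).1
    omega) rfl

noncomputable def FT (f : ℕ → ℕ → R) (ℓ : ℕ) {d : ℕ} (t : TT d) : R :=
  (-1 : R) ^ (t.1 : ℕ) * ∏ m : Fin d, f (ℓ + (m : ℕ)) (t.2.1 m)

lemma FT_Tup (f : ℕ → ℕ → R) (ℓ : ℕ) {d : ℕ} (t : TT d) (h : Acond t) :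
    FT f ℓ (Tup t h) = - FT f ℓ t := by
  show (-1 : R) ^ ((t.1 : ℕ) + 1) * ∏ m : Fin d, f (ℓ + (m : ℕ)) (t.2.1 m)
      = -((-1 : R) ^ (t.1 : ℕ) * ∏ m : Fin d, f (ℓ + (m : ℕ)) (t.2.1 m))
  rw [pow_succ]
  ring

lemma summable_FT (f : ℕ → ℕ → R) (ℓ d : ℕ) (hd : 0 < d)
    (hb : ∀ m, m < d → Filter.Tendsto (fun i => ‖f (ℓ + m) i‖) Filter.atTop (nhds 0)) :
    Summable (fun t : TT d => FT f ℓ t) := by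
  haveI : Nonempty (Fin d) := ⟨⟨0, hd⟩⟩
  apply summable_master f d ℓ hd hb _ (fun t : TT d => t.2.1)
  · intro N
    apply Set.Finite.of_finite_image (f := fun t : TT d => (t.1, t.2.1))
    · apply Set.Finite.subset
        (Set.Finite.prod (Set.finite_univ : (Set.univ : Set (Fin (d+1))).Finite)
          (finite_bounded_tuples d N))
      rintro ⟨r, v⟩ ⟨t, ht, hteq⟩
      cases hteq
      exact ⟨Set.mem_univ _, ht⟩
    · intro t1 _ t2 _ heq
      have h1 : (t1.1 : ℕ) = (t2.1 : ℕ) := congrArg (fun p => ((p.1 : Fin (d+1)) : ℕ))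
        heq
      have h2 : t1.2.1 = t2.2.1 := congrArg Prod.snd heq
      exact T_ext h1 h2
  · intro t
    have : ‖FT f ℓ t‖ = ‖∏ m : Fin d, f (ℓ + (m : ℕ)) (t.2.1 m)‖ := by
      unfold FT
      rcases neg_one_pow_eq_or R (t.1 : ℕ) with h | h <;> rw [h] <;> simp [norm_neg]
    rw [this]
    exact Finset.norm_prod_le' Finset.univ Finset.univ_nonempty _

def involEquiv {d : ℕ} (hd : 0 < d) :
    {t : TT d // Acond t} ≃ {t : TT d // ¬ Acond t} where
  toFun t := ⟨Tup t.1 t.2, Tup_notA t.1 t.2⟩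
  invFun t := ⟨Tdown hd t.1 t.2, Tdown_A hd t.1 t.2⟩
  left_inv t := Subtype.ext (Tdown_Tup hd t.1 t.2 (Tup_notA t.1 t.2))
  right_inv t := Subtype.ext (Tup_Tdown hd t.1 t.2 (Tdown_A hd t.1 t.2))

lemma tsum_FT_zero (f : ℕ → ℕ → R) (ℓ d : ℕ) (hd : 0 < d)
    (hb : ∀ m, m < d → Filter.Tendsto (fun i => ‖f (ℓ + m) i‖) Filter.atTop (nhds 0)) :
    ∑' t : TT d, FT f ℓ t = 0 := by
  have hT := summable_FT f ℓ d hd hb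
  have hsplit := Summable.tsum_add_tsum_compl (s := {t : TT d | Acond t})
    (hT.subtype _) (hT.subtype _)
  have he : ∑' (x : ↥({t : TT d | Acond t}ᶜ)), FT f ℓ x.1
      = - ∑' (x : ↥{t : TT d | Acond t}), FT f ℓ x.1 := by
    have h1 := Equiv.tsum_eq (involEquiv hd)
      (fun t : {t : TT d // ¬ Acond t} => FT f ℓ t.1)
    have h2 : (∑' a : {t : TT d // Acond t}, FT f ℓ ((involEquiv hd) a).1)
        = ∑' a : {t : TT d // Acond t}, - FT f ℓ a.1 :=
      tsum_congr fun a => FT_Tup f ℓ a.1 a.2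
    rw [h2, tsum_neg] at h1
    exact h1.symm
  rw [he] at hsplit
  simpa using hsplit.symm

end Invol

section KeyCancel
variable {R : Type*} [NormedCommRing R] [IsUltrametricDist R] [CompleteSpace R]

lemma key_cancel (f : ℕ → ℕ → R) (ℓ d : ℕ) (hd : 0 < d)
    (hb : ∀ m, m < d → Filter.Tendsto (fun i => ‖f (ℓ + m) i‖) Filter.atTop (nhds 0)) :
    ∑ r ∈ Finset.range (d + 1),
      (-1 : R) ^ r * (MSum f ℓ r * ASum f (ℓ + r) (d - r)) = 0 := by
  have hT := summable_FT f ℓ d hd hb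
  have h0 := tsum_FT_zero f ℓ d hd hb
  rw [Summable.tsum_sigma hT, tsum_fintype] at h0
  have hfib : ∀ r : Fin (d + 1),
      (∑' v : {v : Fin d → ℕ // Gd (r : ℕ) v}, FT f ℓ ⟨r, v⟩)
        = (-1 : R) ^ (r : ℕ) * (MSum f ℓ (r : ℕ) * ASum f (ℓ + (r : ℕ)) (d - (r : ℕ))) := by
    intro r
    have hsum : Summable (fun v : {v : Fin d → ℕ // Gd (r : ℕ) v} =>
        ∏ m : Fin d, f (ℓ + (m : ℕ)) (v.1 m)) := summable_pred f d ℓ hb _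
    have h1 : (∑' v : {v : Fin d → ℕ // Gd (r : ℕ) v}, FT f ℓ ⟨r, v⟩)
        = ∑' v : {v : Fin d → ℕ // Gd (r : ℕ) v},
            (-1 : R) ^ (r : ℕ) * ∏ m : Fin d, f (ℓ + (m : ℕ)) (v.1 m) := rfl
    rw [h1, Summable.tsum_mul_left _ hsum]
    congr 1
    have hrd : (r : ℕ) ≤ d := by have := r.isLt; omega
    have hb' : ∀ m, m < (r : ℕ) + (d - (r : ℕ)) →
        Filter.Tendsto (fun i => ‖f (ℓ + m) i‖) Filter.atTop (nhds 0) := by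
      intro m hm
      exact hb m (by omega)
    rw [mul_eq_gsum f ℓ (r : ℕ) (d - (r : ℕ)) hb']
    exact (GSum_congr f ℓ (r : ℕ) (by omega)).symm
  rw [Finset.sum_congr rfl (fun r _ => hfib r)] at h0
  rw [← Fin.sum_univ_eq_sum_range
    (fun r => (-1 : R) ^ r * (MSum f ℓ r * ASum f (ℓ + r) (d - r))) (d + 1)]
  exact h0

end KeyCancel

end AuxStmt2

/-- `P·S = S·P = I_{n+1}`, i.e. `S = P⁻¹` : the explicit computation of the inverse
`Υ = Ψ⁻¹` of the rigid analytic trivialization of the Anderson–Thakur dual t-motive. -/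
theorem stmt2 {R : Type*} [NormedCommRing R] [IsUltrametricDist R] [CompleteSpace R]
    (n : ℕ) (hn : 1 ≤ n) (f : ℕ → ℕ → R)
    (hf : ∀ m, 1 ≤ m → m ≤ n → Filter.Tendsto (fun i => ‖f m i‖) Filter.atTop (nhds 0)) :
    Pmat f n * Smat f n = 1 ∧ Smat f n * Pmat f n = 1 := by
  have key : Pmat f n * Smat f n = 1 := by
    ext a b
    rw [Matrix.mul_apply]
    rcases lt_trichotomy (a : ℕ) (b : ℕ) with hab | hab | hab
    · rw [Matrix.one_apply_ne (by intro h; rw [h] at hab; exact lt_irrefl _ hab)]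
      apply Finset.sum_eq_zero
      intro k _
      by_cases hk : (k : ℕ) < (b : ℕ)
      · have hS : Smat f n k b = 0 := by
          simp only [Smat, Matrix.of_apply]
          rw [if_neg (by omega), if_neg (by omega)]
        rw [hS, mul_zero]
      · have hP : Pmat f n a k = 0 := by
          simp only [Pmat, Matrix.of_apply]
          rw [if_neg (by omega), if_neg (by omega)]
        rw [hP, zero_mul]
    · have hab' : a = b := Fin.ext hab
      subst hab'
      rw [Matrix.one_apply_eq]
      rw [Finset.sum_eq_single a]
      · simp [Pmat, Smat]
      · intro k _ hk
        have hk' : (k : ℕ) ≠ (a : ℕ) := fun h => hk (Fin.ext h)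
        by_cases hka : (k : ℕ) < (a : ℕ)
        · have hS : Smat f n k a = 0 := by
            simp only [Smat, Matrix.of_apply]
            rw [if_neg (by omega), if_neg (by omega)]
          rw [hS, mul_zero]
        · have hP : Pmat f n a k = 0 := by
            simp only [Pmat, Matrix.of_apply]
            rw [if_neg (by omega), if_neg (by omega)]
          rw [hP, zero_mul]
      · intro h
        exact absurd (Finset.mem_univ a) h
    · -- b < a
      rw [Matrix.one_apply_ne (by intro h; rw [h] at hab; exact lt_irrefl _ hab)]
      have hzero : ∀ k ∈ Finset.univ, k ∉ Finset.Icc b a →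
          Pmat f n a k * Smat f n k b = 0 := by
        intro k _ hk
        rw [Finset.mem_Icc] at hk
        push_neg at hk
        by_cases hkb : (k : ℕ) < (b : ℕ)
        · have hS : Smat f n k b = 0 := by
            simp only [Smat, Matrix.of_apply]
            rw [if_neg (by omega), if_neg (by omega)]
          rw [hS, mul_zero]
        · have hbk : b ≤ k := by
            rw [Fin.le_def]; omega
          have hka : a < k := hk hbk
          rw [Fin.lt_def] at hka
          have hP : Pmat f n a k = 0 := by
            simp only [Pmat, Matrix.of_apply]
            rw [if_neg (by omega), if_neg (by omega)]
          rw [hP, zero_mul]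
      rw [← Finset.sum_subset (Finset.subset_univ (Finset.Icc b a)) hzero]
      have hterm : ∀ k ∈ Finset.Icc b a, Pmat f n a k * Smat f n k b
          = (-1 : R) ^ ((k : ℕ) - (b : ℕ)) * (MSum f ((b : ℕ) + 1) ((k : ℕ) - (b : ℕ))
              * ASum f ((b : ℕ) + 1 + ((k : ℕ) - (b : ℕ)))
                  ((a : ℕ) - (b : ℕ) - ((k : ℕ) - (b : ℕ)))) := by
        intro k hk
        rw [Finset.mem_Icc, Fin.le_def, Fin.le_def] at hk
        obtain ⟨hbk, hka⟩ := hk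
        have hP : Pmat f n a k = ASum f ((k : ℕ) + 1) ((a : ℕ) - (k : ℕ)) := by
          by_cases hak : (a : ℕ) = (k : ℕ)
          · simp only [Pmat, Matrix.of_apply, if_pos hak]
            rw [show (a : ℕ) - (k : ℕ) = 0 by omega, ASum_zero]
          · simp only [Pmat, Matrix.of_apply]
            rw [if_neg hak, if_pos (by omega)]
            exact Lser_eq_ASum f ((k : ℕ) + 1) (a : ℕ) _ (by omega)
        have hS : Smat f n k b
            = (-1 : R) ^ ((k : ℕ) - (b : ℕ)) * MSum f ((b : ℕ) + 1) ((k : ℕ) - (b : ℕ)) := by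
          by_cases hkb : (k : ℕ) = (b : ℕ)
          · simp only [Smat, Matrix.of_apply, if_pos hkb]
            rw [show (k : ℕ) - (b : ℕ) = 0 by omega, MSum_zero]
            simp
          · simp only [Smat, Matrix.of_apply]
            rw [if_neg hkb, if_pos (by omega)]
            rw [Lstar_eq_MSum f ((b : ℕ) + 1) (k : ℕ) ((k : ℕ) - (b : ℕ)) (by omega)]
        rw [hP, hS]
        have e1 : (b : ℕ) + 1 + ((k : ℕ) - (b : ℕ)) = (k : ℕ) + 1 := by omega
        have e2 : (a : ℕ) - (b : ℕ) - ((k : ℕ) - (b : ℕ)) = (a : ℕ) - (k : ℕ) := by omega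
        rw [e1, e2]
        ring
      rw [Finset.sum_congr rfl hterm]
      have hre : ∑ k ∈ Finset.Icc b a,
          (-1 : R) ^ ((k : ℕ) - (b : ℕ)) * (MSum f ((b : ℕ) + 1) ((k : ℕ) - (b : ℕ))
            * ASum f ((b : ℕ) + 1 + ((k : ℕ) - (b : ℕ)))
                ((a : ℕ) - (b : ℕ) - ((k : ℕ) - (b : ℕ))))
          = ∑ r ∈ Finset.range ((a : ℕ) - (b : ℕ) + 1),
            (-1 : R) ^ r * (MSum f ((b : ℕ) + 1) r
              * ASum f ((b : ℕ) + 1 + r) ((a : ℕ) - (b : ℕ) - r)) := by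
        have han : (a : ℕ) ≤ n := by
          have := a.isLt
          omega
        apply Finset.sum_nbij' (fun k : Fin (n + 1) => (k : ℕ) - (b : ℕ))
          (fun r : ℕ => (⟨min ((b : ℕ) + r) n, by omega⟩ : Fin (n + 1)))
        · intro k hk
          rw [Finset.mem_Icc, Fin.le_def, Fin.le_def] at hk
          rw [Finset.mem_range]
          omega
        · intro r hr
          rw [Finset.mem_range] at hr
          rw [Finset.mem_Icc, Fin.le_def, Fin.le_def]
          constructor
          · show (b : ℕ) ≤ min ((b : ℕ) + r) n
            omega
          · show min ((b : ℕ) + r) n ≤ (a : ℕ)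
            omega
        · intro k hk
          rw [Finset.mem_Icc, Fin.le_def, Fin.le_def] at hk
          apply Fin.ext
          show min ((b : ℕ) + ((k : ℕ) - (b : ℕ))) n = (k : ℕ)
          omega
        · intro r hr
          rw [Finset.mem_range] at hr
          show min ((b : ℕ) + r) n - (b : ℕ) = r
          omega
        · intro k hk
          rfl
      rw [hre]
      apply key_cancel f ((b : ℕ) + 1) ((a : ℕ) - (b : ℕ)) (by omega)
      intro m hm
      have h1 : 1 ≤ (b : ℕ) + 1 + m := by omega
      have h2 : (b : ℕ) + 1 + m ≤ n := by
        have := a.isLt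
        omega
      exact hf ((b : ℕ) + 1 + m) h1 h2
  exact ⟨key, mul_eq_one_comm.mp key⟩
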